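/- arXiv:1911.02015 — 2 statements merged into one kernel-verified Lean document; each statement's English description precedes it below -/
import Mathlib

section
/- Let ρ, ρ₀, h, g be positive reals and let x : ℝ → ℝ be twice differentiable with x(0) = 0, x'(0) = 0, and x''(t) = g − (ρ₀ g / (ρ h²)) x(t)² for all t. Define λ > 0 by λ² = 12 (ρ/ρ₀) h², ω > 0 by ω⁴ = (1/3)(ρ₀/ρ)(g²/h²), and u(s) = − x(s/ω)/λ. Then u'(s)² = 4 u(s)³ − u(s) for all s ∈ ℝ. -/
theorem paraboloid_rescaled_first_integral (ρ ρ₀ h g : ℝ) (hρ : 0 < ρ) (hρ₀ : 0 < ρ₀)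
    (hh : 0 < h) (hg : 0 < g) (x : ℝ → ℝ)
    (hx1 : Differentiable ℝ x) (hx2 : Differentiable ℝ (deriv x))
    (h0 : x 0 = 0) (h0' : deriv x 0 = 0)
    (hode : ∀ t : ℝ, deriv (deriv x) t = g - (ρ₀ * g / (ρ * h ^ 2)) * x t ^ 2)
    (lam ω : ℝ) (hlam : 0 < lam) (hlam2 : lam ^ 2 = 12 * (ρ / ρ₀) * h ^ 2)
    (hω : 0 < ω) (hω4 : ω ^ 4 = (1 / 3) * (ρ₀ / ρ) * (g ^ 2 / h ^ 2)) :
    let u : ℝ → ℝ := fun s => -x (s / ω) / lam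
    ∀ s : ℝ, (deriv u s) ^ 2 = 4 * u s ^ 3 - u s := by
  intro u s
  set k : ℝ := ρ₀ * g / (ρ * h ^ 2) with hk
  have hkpos : 0 < k := by positivity
  -- Energy identity
  set E : ℝ → ℝ := fun t => (deriv x t) ^ 2 - 2 * g * x t + (2 / 3) * k * x t ^ 3 with hE
  have hEderiv : ∀ t : ℝ, HasDerivAt E 0 t := by
    intro t
    have h1 : HasDerivAt (deriv x) (deriv (deriv x) t) t := (hx2 t).hasDerivAt
    have h2 : HasDerivAt x (deriv x t) t := (hx1 t).hasDerivAt
    have : HasDerivAt E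
        (2 * deriv x t ^ 1 * deriv (deriv x) t - 2 * g * deriv x t
          + (2 / 3) * k * (3 * x t ^ 2 * deriv x t)) t := by
      exact ((h1.pow 2).sub (h2.const_mul (2 * g))).add ((h2.pow 3).const_mul ((2 / 3) * k))
    convert this using 1
    rw [hode t]
    ring
  have hEconst : ∀ t : ℝ, E t = E 0 :=
    fun t => is_const_of_deriv_eq_zero (fun y => (hEderiv y).differentiableAt)
      (fun y => (hEderiv y).deriv) t 0
  have hE0 : E 0 = 0 := by simp [hE, h0, h0']
  have energy : ∀ t : ℝ, (deriv x t) ^ 2 = 2 * g * x t - (2 / 3) * k * x t ^ 3 := by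
    intro t
    have := (hEconst t).trans hE0
    simp only [hE] at this
    linarith
  -- derivative of u
  have hud : HasDerivAt u (-(deriv x (s / ω)) / (lam * ω)) s := by
    have hin : HasDerivAt (fun s : ℝ => s / ω) (1 / ω) s := by
      simpa using (hasDerivAt_id s).div_const ω
    have hxd : HasDerivAt x (deriv x (s / ω)) (s / ω) := (hx1 (s / ω)).hasDerivAt
    have hcomp := HasDerivAt.comp s hxd hin
    have := (hcomp.neg).div_const lam
    rw [show -(deriv x (s / ω)) / (lam * ω) = -(deriv x (s / ω) * (1 / ω)) / lam by ring]
    exact this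
  rw [hud.deriv]
  -- algebraic identities
  have hlo2 : (lam * ω ^ 2) ^ 2 = (2 * g) ^ 2 := by
    have : (lam * ω ^ 2) ^ 2 = lam ^ 2 * ω ^ 4 := by ring
    rw [this, hlam2, hω4]
    field_simp
    ring
  have hlo : lam * ω ^ 2 = 2 * g := by
    have hpos : 0 < lam * ω ^ 2 := by positivity
    nlinarith
  have hkl2 : (k * lam) ^ 2 = (6 * ω ^ 2) ^ 2 := by
    have : (k * lam) ^ 2 = k ^ 2 * lam ^ 2 := by ring
    rw [this, hlam2, hk]
    have h36 : (6 * ω ^ 2) ^ 2 = 36 * ω ^ 4 := by ring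
    rw [h36, hω4]
    field_simp
    ring
  have hkl : k * lam = 6 * ω ^ 2 := by
    have hpos : 0 < k * lam := by positivity
    nlinarith
  -- finish
  have hx' := energy (s / ω)
  show (-(deriv x (s / ω)) / (lam * ω)) ^ 2 = 4 * (-x (s / ω) / lam) ^ 3 - (-x (s / ω) / lam)
  have hlamne : lam ≠ 0 := ne_of_gt hlam
  have hωne : ω ≠ 0 := ne_of_gt hω
  field_simp
  linear_combination lam * hx' + (- lam * x (s / ω)) * hlo -
    (2 / 3) * x (s / ω) ^ 3 * hkl
end

section
/- Let ρ, ρ₀, h, g be positive reals and let x : ℝ → ℝ be twice differentiable with x(0) = h, x'(0) = 0, and x''(t) = g − (ρ₀ g / (ρ h²)) x(t)² for all t. Define λ > 0 by λ² = 12 (ρ/ρ₀) h², ω > 0 by ω⁴ = (1/3)(ρ₀/ρ)(g²/h²), and u(s) = − x(s/ω)/λ. Then for all s ∈ ℝ, u'(s)² = 4 u(s)³ − u(s) − g₃, where g₃ = (1/2) √(ρ₀/(3ρ)) (1 − ρ₀/(3ρ)). -/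
lemma sq_eq_sq_of_pos {a b : ℝ} (ha : 0 < a) (hb : 0 < b) (h : a ^ 2 = b ^ 2) :
    a = b := by nlinarith [sq_nonneg (a - b), sq_nonneg (a + b)]

theorem paraboloid_ascent_rescaled_first_integral (ρ ρ₀ h g : ℝ) (hρ : 0 < ρ)
    (hρ₀ : 0 < ρ₀) (hh : 0 < h) (hg : 0 < g) (x : ℝ → ℝ)
    (hx1 : Differentiable ℝ x) (hx2 : Differentiable ℝ (deriv x))
    (h0 : x 0 = h) (h0' : deriv x 0 = 0)
    (hode : ∀ t : ℝ, deriv (deriv x) t = g - (ρ₀ * g / (ρ * h ^ 2)) * x t ^ 2)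
    (lam ω : ℝ) (hlam : 0 < lam) (hlam2 : lam ^ 2 = 12 * (ρ / ρ₀) * h ^ 2)
    (hω : 0 < ω) (hω4 : ω ^ 4 = (1 / 3) * (ρ₀ / ρ) * (g ^ 2 / h ^ 2)) :
    let u : ℝ → ℝ := fun s => -x (s / ω) / lam
    let g₃ : ℝ := (1 / 2) * Real.sqrt (ρ₀ / (3 * ρ)) * (1 - ρ₀ / (3 * ρ))
    ∀ s : ℝ, (deriv u s) ^ 2 = 4 * u s ^ 3 - u s - g₃ := by
  -- Energy conservation
  have hEdiff : Differentiable ℝ (fun t => (deriv x t) ^ 2 - 2 * g * x t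
      + (2 / 3) * (ρ₀ * g / (ρ * h ^ 2)) * (x t) ^ 3) := by
    fun_prop
  have hE0 : ∀ t, deriv (fun t => (deriv x t) ^ 2 - 2 * g * x t
      + (2 / 3) * (ρ₀ * g / (ρ * h ^ 2)) * (x t) ^ 3) t = 0 := by
    intro t
    have h1 : HasDerivAt (deriv x) (deriv (deriv x) t) t := (hx2 t).hasDerivAt
    have h2 : HasDerivAt x (deriv x t) t := (hx1 t).hasDerivAt
    have hD := (((h1.pow 2).sub (h2.const_mul (2 * g))).add
      ((h2.pow 3).const_mul ((2 / 3) * (ρ₀ * g / (ρ * h ^ 2)))))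
    convert hD.deriv using 1
    · rfl
    rw [hode t]
    push_cast
    ring
  have energy : ∀ t, (deriv x t) ^ 2 = 2 * g * x t
      - (2 / 3) * (ρ₀ * g / (ρ * h ^ 2)) * (x t) ^ 3
      + (-(2 * g * h) + (2 / 3) * (ρ₀ * g / (ρ * h ^ 2)) * h ^ 3) := by
    intro t
    have hc := is_const_of_deriv_eq_zero hEdiff hE0 t 0
    rw [h0, h0'] at hc
    nlinarith [hc]
  -- derivative of the rescaled function
  have hu' : ∀ s : ℝ, deriv (fun s => -x (s / ω) / lam) s
      = -(deriv x (s / ω)) / (lam * ω) := by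
    intro s
    have hc : HasDerivAt (fun s : ℝ => s / ω) (1 / ω) s := by
      simpa using (hasDerivAt_id s).div_const ω
    have h2 : HasDerivAt (fun s => x (s / ω)) (deriv x (s / ω) * (1 / ω)) s :=
      (hx1 (s / ω)).hasDerivAt.comp s hc
    have h3 : HasDerivAt (fun s => -x (s / ω) / lam)
        (-(deriv x (s / ω) * (1 / ω)) / lam) s := h2.neg.div_const lam
    rw [h3.deriv]
    ring
  intro u g₃ s
  simp only [u, g₃]
  rw [hu' s]
  set A := Real.sqrt (ρ₀ / (3 * ρ)) with hAdef
  have hA : 0 < A := Real.sqrt_pos.mpr (by positivity)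
  have hA2 : A ^ 2 = ρ₀ / (3 * ρ) := Real.sq_sqrt (by positivity)
  have hω2 : ω ^ 2 = g * A / h := by
    have h1 : (ω ^ 2) ^ 2 = (g * A / h) ^ 2 := by
      rw [div_pow, mul_pow, hA2, ← pow_mul]
      rw [show 2 * 2 = 4 from rfl, hω4]
      field_simp
    exact sq_eq_sq_of_pos (by positivity) (by positivity) h1
  have hρ₀A : ρ₀ = 3 * ρ * A ^ 2 := by
    rw [hA2]; field_simp
  have hlamA : lam = 2 * h / A := by
    have h1 : lam ^ 2 = (2 * h / A) ^ 2 := by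
      rw [hlam2, div_pow, mul_pow, hA2, hρ₀A]
      field_simp
      ring
    exact sq_eq_sq_of_pos hlam (by positivity) h1
  have hLΩ : (lam * ω) ^ 2 = 4 * g * h / A := by
    rw [mul_pow, hω2, hlamA]
    field_simp
    ring
  have hsplit : (-(deriv x (s / ω)) / (lam * ω)) ^ 2
      = (deriv x (s / ω)) ^ 2 / ((lam * ω) ^ 2) := by ring
  rw [hsplit, hLΩ, energy (s / ω), hρ₀A, hlamA]
  have hAne : A ≠ 0 := ne_of_gt hA
  field_simp
  ring
end
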